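/- Necessary conditions for optimizers (Lemma 2, direct direction): if random variables X, Y, U (finite-valued, on a common probability space) satisfy I[X:U] = 0 and I[U:Y] = H[Y|X], then H[Y|(X,U)] = 0 and I[X:U|Y] = 0. -/

import Mathlib

open MeasureTheory ProbabilityTheory Real

noncomputable section

variable {Ω : Type*} [MeasurableSpace Ω]

/-- Shannon entropy (natural logarithm) of a finite-valued random variable `Z` under `μ`. -/
def ent {S : Type*} [Fintype S] (μ : Measure Ω) (Z : Ω → S) : ℝ :=
  ∑ z : S, Real.negMulLog (μ (Z ⁻¹' {z})).toReal

/-- Conditional entropy `H[Z₁ | Z₂] = H[(Z₁,Z₂)] - H[Z₂]`. -/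
def condEnt {S T : Type*} [Fintype S] [Fintype T] (μ : Measure Ω)
    (Z₁ : Ω → S) (Z₂ : Ω → T) : ℝ :=
  ent μ (fun ω => (Z₁ ω, Z₂ ω)) - ent μ Z₂

/-- Mutual information `I[Z₁ : Z₂] = H[Z₁] + H[Z₂] - H[(Z₁,Z₂)]`. -/
def mutInfo {S T : Type*} [Fintype S] [Fintype T] (μ : Measure Ω)
    (Z₁ : Ω → S) (Z₂ : Ω → T) : ℝ :=
  ent μ Z₁ + ent μ Z₂ - ent μ (fun ω => (Z₁ ω, Z₂ ω))

/-- Conditional mutual information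
`I[Z₁ : Z₂ | Z₃] = H[(Z₁,Z₃)] + H[(Z₂,Z₃)] - H[(Z₁,Z₂,Z₃)] - H[Z₃]`. -/
def condMutInfo {S T R : Type*} [Fintype S] [Fintype T] [Fintype R] (μ : Measure Ω)
    (Z₁ : Ω → S) (Z₂ : Ω → T) (Z₃ : Ω → R) : ℝ :=
  ent μ (fun ω => (Z₁ ω, Z₃ ω)) + ent μ (fun ω => (Z₂ ω, Z₃ ω))
    - ent μ (fun ω => (Z₁ ω, Z₂ ω, Z₃ ω)) - ent μ Z₃

/-! ### Auxiliary lemmas -/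

/-- Superadditivity of `negMulLog` over finite sums of nonnegative reals. -/
lemma negMulLog_sum_le' {ι : Type*} (s : Finset ι) (f : ι → ℝ) (hf : ∀ i ∈ s, 0 ≤ f i) :
    Real.negMulLog (∑ i ∈ s, f i) ≤ ∑ i ∈ s, Real.negMulLog (f i) := by
  rw [Real.negMulLog, neg_mul, Finset.sum_mul, ← Finset.sum_neg_distrib]
  apply Finset.sum_le_sum
  intro i hi
  rcases eq_or_lt_of_le (hf i hi) with h | h
  · simp [← h, Real.negMulLog]
  · rw [Real.negMulLog, neg_mul, neg_le_neg_iff]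
    apply mul_le_mul_of_nonneg_left _ (hf i hi)
    exact Real.log_le_log h (Finset.single_le_sum hf hi)

/-- The key analytic inequality (submodularity of entropy, in terms of raw sums). -/
lemma submod_real {S T R : Type*} [Fintype S] [Fintype T] [Fintype R]
    (q : S → T → R → ℝ) (hq : ∀ s t r, 0 ≤ q s t r) :
    (∑ s : S, ∑ t : T, ∑ r : R, Real.negMulLog (q s t r))
      + ∑ r : R, Real.negMulLog (∑ s : S, ∑ t : T, q s t r)
    ≤ (∑ s : S, ∑ r : R, Real.negMulLog (∑ t : T, q s t r))
      + ∑ t : T, ∑ r : R, Real.negMulLog (∑ s : S, q s t r) := by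
  set A : S → R → ℝ := fun s r => ∑ t, q s t r with hA
  set B : T → R → ℝ := fun t r => ∑ s, q s t r with hB
  set C : R → ℝ := fun r => ∑ s, ∑ t, q s t r with hC
  have hA0 : ∀ s r, 0 ≤ A s r := fun s r => Finset.sum_nonneg fun t _ => hq s t r
  have hB0 : ∀ t r, 0 ≤ B t r := fun t r => Finset.sum_nonneg fun s _ => hq s t r
  have hqA : ∀ s t r, q s t r ≤ A s r := fun s t r =>
    Finset.single_le_sum (fun t _ => hq s t r) (Finset.mem_univ t)
  have hqB : ∀ s t r, q s t r ≤ B t r := fun s t r =>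
    Finset.single_le_sum (fun s _ => hq s t r) (Finset.mem_univ s)
  have hAC : ∀ s r, A s r ≤ C r := fun s r =>
    Finset.single_le_sum (fun s _ => hA0 s r) (Finset.mem_univ s)
  have key : ∀ s t r, q s t r - A s r * B t r / C r ≤
      q s t r * Real.log (q s t r) + q s t r * Real.log (C r)
        - q s t r * Real.log (A s r) - q s t r * Real.log (B t r) := by
    intro s t r
    rcases eq_or_lt_of_le (hq s t r) with h | h
    · have h0 : 0 ≤ A s r * B t r / C r := by
        have := hA0 s r
        have := hB0 t r
        have : 0 ≤ C r := Finset.sum_nonneg fun s _ => hA0 s r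
        positivity
      rw [← h]; simp only [zero_mul, zero_sub, sub_zero, zero_add, add_zero, neg_zero]
      linarith
    · have hA' : 0 < A s r := lt_of_lt_of_le h (hqA s t r)
      have hB' : 0 < B t r := lt_of_lt_of_le h (hqB s t r)
      have hC' : 0 < C r := lt_of_lt_of_le hA' (hAC s r)
      have hx : 0 < A s r * B t r / (C r * q s t r) := by positivity
      have hlog := Real.log_le_sub_one_of_pos hx
      have hexp : Real.log (A s r * B t r / (C r * q s t r))
          = Real.log (A s r) + Real.log (B t r) - (Real.log (C r) + Real.log (q s t r)) := by
        rw [Real.log_div (by positivity) (by positivity), Real.log_mul hA'.ne' hB'.ne',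
          Real.log_mul hC'.ne' h.ne']
      rw [hexp] at hlog
      have hmul := mul_le_mul_of_nonneg_left hlog (le_of_lt h)
      have hq' : q s t r * (A s r * B t r / (C r * q s t r) - 1)
          = A s r * B t r / C r - q s t r := by
        field_simp
      nlinarith [hmul, hq']
  have hsum : ∑ s : S, ∑ t : T, ∑ r : R, (q s t r - A s r * B t r / C r) ≤
      ∑ s : S, ∑ t : T, ∑ r : R, (q s t r * Real.log (q s t r) + q s t r * Real.log (C r)
        - q s t r * Real.log (A s r) - q s t r * Real.log (B t r)) := by
    refine Finset.sum_le_sum fun s _ => Finset.sum_le_sum fun t _ => Finset.sum_le_sum fun r _ => ?_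
    exact key s t r
  have h1 : ∑ s : S, ∑ t : T, ∑ r : R, q s t r = ∑ r : R, C r := by
    calc ∑ s : S, ∑ t : T, ∑ r : R, q s t r
        = ∑ s : S, ∑ r : R, ∑ t : T, q s t r :=
          Finset.sum_congr rfl fun s _ => Finset.sum_comm
      _ = ∑ r : R, ∑ s : S, ∑ t : T, q s t r := Finset.sum_comm
  have h2 : ∑ s : S, ∑ t : T, ∑ r : R, (A s r * B t r / C r) = ∑ r : R, C r := by
    calc ∑ s : S, ∑ t : T, ∑ r : R, (A s r * B t r / C r)
        = ∑ s : S, ∑ r : R, ∑ t : T, (A s r * B t r / C r) :=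
          Finset.sum_congr rfl fun s _ => Finset.sum_comm
      _ = ∑ r : R, ∑ s : S, ∑ t : T, (A s r * B t r / C r) := Finset.sum_comm
      _ = ∑ r : R, C r := by
          refine Finset.sum_congr rfl fun r _ => ?_
          have hstep : ∑ s : S, ∑ t : T, (A s r * B t r / C r)
              = (∑ s : S, A s r) * (∑ t : T, B t r) / C r := by
            rw [Finset.sum_mul, Finset.sum_div]
            refine Finset.sum_congr rfl fun s _ => ?_
            rw [Finset.mul_sum, Finset.sum_div]
          rw [hstep]
          have hAsum : ∑ s : S, A s r = C r := rfl
          have hBsum : ∑ t : T, B t r = C r := Finset.sum_comm.symm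
          rw [hAsum, hBsum]
          rcases eq_or_ne (C r) 0 with h | h
          · simp [h]
          · field_simp
  have htot : ∑ s : S, ∑ t : T, ∑ r : R, (q s t r - A s r * B t r / C r) = 0 := by
    simp only [Finset.sum_sub_distrib]
    rw [h1, h2, sub_self]
  have e1 : ∑ s : S, ∑ r : R, Real.negMulLog (A s r)
      = -∑ s : S, ∑ t : T, ∑ r : R, (q s t r * Real.log (A s r)) := by
    rw [← Finset.sum_neg_distrib]
    refine Finset.sum_congr rfl fun s _ => ?_
    rw [← Finset.sum_neg_distrib]
    calc ∑ r : R, Real.negMulLog (A s r)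
        = ∑ r : R, -∑ t : T, (q s t r * Real.log (A s r)) := by
          refine Finset.sum_congr rfl fun r _ => ?_
          rw [Real.negMulLog, neg_mul, hA]
          simp only
          rw [Finset.sum_mul]
      _ = ∑ r : R, ∑ t : T, -(q s t r * Real.log (A s r)) := by
          refine Finset.sum_congr rfl fun r _ => (Finset.sum_neg_distrib _).symm
      _ = ∑ t : T, ∑ r : R, -(q s t r * Real.log (A s r)) := Finset.sum_comm
      _ = ∑ t : T, -∑ r : R, (q s t r * Real.log (A s r)) := by
          refine Finset.sum_congr rfl fun t _ => Finset.sum_neg_distrib _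
  have e2 : ∑ t : T, ∑ r : R, Real.negMulLog (B t r)
      = -∑ s : S, ∑ t : T, ∑ r : R, (q s t r * Real.log (B t r)) := by
    have inner : ∀ t r, Real.negMulLog (B t r) = ∑ s : S, -(q s t r * Real.log (B t r)) := by
      intro t r
      rw [Real.negMulLog, neg_mul, hB]
      simp only
      rw [Finset.sum_mul, ← Finset.sum_neg_distrib]
    calc ∑ t : T, ∑ r : R, Real.negMulLog (B t r)
        = ∑ t : T, ∑ r : R, ∑ s : S, -(q s t r * Real.log (B t r)) := by
          exact Finset.sum_congr rfl fun t _ => Finset.sum_congr rfl fun r _ => inner t r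
      _ = ∑ t : T, ∑ s : S, ∑ r : R, -(q s t r * Real.log (B t r)) :=
          Finset.sum_congr rfl fun t _ => Finset.sum_comm
      _ = ∑ s : S, ∑ t : T, ∑ r : R, -(q s t r * Real.log (B t r)) := Finset.sum_comm
      _ = -∑ s : S, ∑ t : T, ∑ r : R, (q s t r * Real.log (B t r)) := by
          simp only [Finset.sum_neg_distrib]
  have e3 : ∑ r : R, Real.negMulLog (C r)
      = -∑ s : S, ∑ t : T, ∑ r : R, (q s t r * Real.log (C r)) := by
    have inner : ∀ r, Real.negMulLog (C r) = ∑ s : S, ∑ t : T, -(q s t r * Real.log (C r)) := by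
      intro r
      rw [Real.negMulLog, neg_mul, hC]
      simp only
      rw [Finset.sum_mul, ← Finset.sum_neg_distrib]
      refine Finset.sum_congr rfl fun s _ => ?_
      rw [Finset.sum_mul, ← Finset.sum_neg_distrib]
    calc ∑ r : R, Real.negMulLog (C r)
        = ∑ r : R, ∑ s : S, ∑ t : T, -(q s t r * Real.log (C r)) :=
          Finset.sum_congr rfl fun r _ => inner r
      _ = ∑ s : S, ∑ r : R, ∑ t : T, -(q s t r * Real.log (C r)) := Finset.sum_comm
      _ = ∑ s : S, ∑ t : T, ∑ r : R, -(q s t r * Real.log (C r)) :=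
          Finset.sum_congr rfl fun s _ => Finset.sum_comm
      _ = -∑ s : S, ∑ t : T, ∑ r : R, (q s t r * Real.log (C r)) := by
          simp only [Finset.sum_neg_distrib]
  have e4 : ∑ s : S, ∑ t : T, ∑ r : R, Real.negMulLog (q s t r)
      = -∑ s : S, ∑ t : T, ∑ r : R, (q s t r * Real.log (q s t r)) := by
    simp only [Real.negMulLog, neg_mul, Finset.sum_neg_distrib]
  rw [e1, e2, e3, e4]
  simp only [Finset.sum_add_distrib, Finset.sum_sub_distrib] at hsum htot
  linarith

lemma measure_pair_marg {S T : Type*} [Fintype S] [MeasurableSpace S] [MeasurableSingletonClass S]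
    [MeasurableSpace T] [MeasurableSingletonClass T]
    (μ : Measure Ω) (f : Ω → S) (g : Ω → T) (hf : Measurable f) (hg : Measurable g) (t : T) :
    μ (g ⁻¹' {t}) = ∑ s : S, μ ((fun ω => (f ω, g ω)) ⁻¹' {(s, t)}) := by
  have : g ⁻¹' {t} = ⋃ s : S, (fun ω => (f ω, g ω)) ⁻¹' {(s, t)} := by
    ext ω; simp [Prod.ext_iff]
  rw [this, measure_iUnion, tsum_fintype]
  · intro i j hij
    simp only [Function.onFun, Set.disjoint_left]
    intro ω h1 h2
    simp only [Set.mem_preimage, Set.mem_singleton_iff, Prod.ext_iff] at h1 h2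
    exact hij (h1.1.symm.trans h2.1)
  · intro s
    exact (hf.prodMk hg) (measurableSet_singleton _)

lemma measure_pair_marg_real {S T : Type*} [Fintype S] [MeasurableSpace S]
    [MeasurableSingletonClass S] [MeasurableSpace T] [MeasurableSingletonClass T]
    (μ : Measure Ω) [IsFiniteMeasure μ]
    (f : Ω → S) (g : Ω → T) (hf : Measurable f) (hg : Measurable g) (t : T) :
    (μ (g ⁻¹' {t})).toReal = ∑ s : S, (μ ((fun ω => (f ω, g ω)) ⁻¹' {(s, t)})).toReal := by
  rw [measure_pair_marg μ f g hf hg t, ENNReal.toReal_sum]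
  intro s _
  exact measure_ne_top μ _

lemma ent_comp_equiv {S T : Type*} [Fintype S] [Fintype T] (μ : Measure Ω)
    (e : S ≃ T) (Z : Ω → S) :
    ent μ (fun ω => e (Z ω)) = ent μ Z := by
  unfold ent
  refine (Fintype.sum_equiv e _ _ fun s => ?_).symm
  have : (fun ω => e (Z ω)) ⁻¹' {e s} = Z ⁻¹' {s} := by
    ext ω; simp [EmbeddingLike.apply_eq_iff_eq]
  rw [this]

lemma condEnt_nonneg {S T : Type*} [Fintype S] [MeasurableSpace S] [MeasurableSingletonClass S]
    [Fintype T] [MeasurableSpace T] [MeasurableSingletonClass T]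
    (μ : Measure Ω) [IsFiniteMeasure μ]
    (Z₁ : Ω → S) (Z₂ : Ω → T) (h₁ : Measurable Z₁) (h₂ : Measurable Z₂) :
    0 ≤ condEnt μ Z₁ Z₂ := by
  rw [condEnt, sub_nonneg]
  have hpair : ent μ (fun ω => (Z₁ ω, Z₂ ω))
      = ∑ t : T, ∑ s : S, Real.negMulLog (μ ((fun ω => (Z₁ ω, Z₂ ω)) ⁻¹' {(s, t)})).toReal := by
    rw [ent, Fintype.sum_prod_type]
    exact Finset.sum_comm
  rw [hpair, ent]
  refine Finset.sum_le_sum fun t _ => ?_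
  rw [measure_pair_marg_real μ Z₁ Z₂ h₁ h₂ t]
  exact negMulLog_sum_le' Finset.univ _ fun s _ => ENNReal.toReal_nonneg

lemma condMutInfo_nonneg {S T R : Type*}
    [Fintype S] [MeasurableSpace S] [MeasurableSingletonClass S]
    [Fintype T] [MeasurableSpace T] [MeasurableSingletonClass T]
    [Fintype R] [MeasurableSpace R] [MeasurableSingletonClass R]
    (μ : Measure Ω) [IsFiniteMeasure μ]
    (Z₁ : Ω → S) (Z₂ : Ω → T) (Z₃ : Ω → R)
    (h₁ : Measurable Z₁) (h₂ : Measurable Z₂) (h₃ : Measurable Z₃) :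
    0 ≤ condMutInfo μ Z₁ Z₂ Z₃ := by
  set q : S → T → R → ℝ :=
    fun s t r => (μ ((fun ω => (Z₁ ω, Z₂ ω, Z₃ ω)) ⁻¹' {(s, t, r)})).toReal with hqdef
  have hq : ∀ s t r, 0 ≤ q s t r := fun _ _ _ => ENNReal.toReal_nonneg
  have htriple : ent μ (fun ω => (Z₁ ω, Z₂ ω, Z₃ ω))
      = ∑ s : S, ∑ t : T, ∑ r : R, Real.negMulLog (q s t r) := by
    rw [ent, Fintype.sum_prod_type]
    refine Finset.sum_congr rfl fun s _ => ?_
    rw [Fintype.sum_prod_type]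
  have h23 : ent μ (fun ω => (Z₂ ω, Z₃ ω))
      = ∑ t : T, ∑ r : R, Real.negMulLog (∑ s : S, q s t r) := by
    rw [ent, Fintype.sum_prod_type]
    refine Finset.sum_congr rfl fun t _ => Finset.sum_congr rfl fun r _ => ?_
    congr 1
    exact measure_pair_marg_real μ Z₁ (fun ω => (Z₂ ω, Z₃ ω)) h₁ (h₂.prodMk h₃) (t, r)
  have h13 : ent μ (fun ω => (Z₁ ω, Z₃ ω))
      = ∑ s : S, ∑ r : R, Real.negMulLog (∑ t : T, q s t r) := by
    rw [ent, Fintype.sum_prod_type]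
    refine Finset.sum_congr rfl fun s _ => Finset.sum_congr rfl fun r _ => ?_
    congr 1
    rw [measure_pair_marg_real μ Z₂ (fun ω => (Z₁ ω, Z₃ ω)) h₂ (h₁.prodMk h₃) (s, r)]
    refine Finset.sum_congr rfl fun t _ => ?_
    rw [hqdef]
    congr 2
    ext ω
    simp only [Set.mem_preimage, Set.mem_singleton_iff, Prod.ext_iff]
    tauto
  have h3 : ent μ Z₃ = ∑ r : R, Real.negMulLog (∑ s : S, ∑ t : T, q s t r) := by
    rw [ent]
    refine Finset.sum_congr rfl fun r _ => ?_
    congr 1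
    rw [measure_pair_marg_real μ Z₂ Z₃ h₂ h₃ r]
    rw [Finset.sum_comm]
    refine Finset.sum_congr rfl fun t _ => ?_
    exact measure_pair_marg_real μ Z₁ (fun ω => (Z₂ ω, Z₃ ω)) h₁ (h₂.prodMk h₃) (t, r)
  rw [condMutInfo, htriple, h23, h13, h3]
  have := submod_real q hq
  linarith

/-- Necessary conditions for optimizers (Lemma 2, direct direction). -/
theorem optimizer_necessity {𝒳 𝒴 𝒰 : Type*} [Fintype 𝒳] [Nonempty 𝒳] [MeasurableSpace 𝒳] [MeasurableSingletonClass 𝒳]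
    [Fintype 𝒴] [Nonempty 𝒴] [MeasurableSpace 𝒴] [MeasurableSingletonClass 𝒴]
    [Fintype 𝒰] [Nonempty 𝒰] [MeasurableSpace 𝒰] [MeasurableSingletonClass 𝒰]
    (μ : Measure Ω) [IsProbabilityMeasure μ]
    (X : Ω → 𝒳) (Y : Ω → 𝒴) (U : Ω → 𝒰)
    (hX : Measurable X) (hY : Measurable Y) (hU : Measurable U)
    (h1 : mutInfo μ X U = 0)
    (h2 : mutInfo μ U Y = condEnt μ Y X) :
    condEnt μ Y (fun ω => (X ω, U ω)) = 0 ∧ condMutInfo μ X U Y = 0 := by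
  -- entropy abbreviations
  set a := ent μ X with ha
  set b := ent μ Y with hb
  set c := ent μ U with hc
  set eXY := ent μ (fun ω => (X ω, Y ω)) with hXY
  set eXU := ent μ (fun ω => (X ω, U ω)) with hXU
  set eUY := ent μ (fun ω => (U ω, Y ω)) with hUY
  set eT := ent μ (fun ω => (X ω, U ω, Y ω)) with hT
  -- reorderings of tuples
  have eYX : ent μ (fun ω => (Y ω, X ω)) = eXY := by
    exact ent_comp_equiv μ
      (⟨fun p => (p.2, p.1), fun p => (p.2, p.1), fun p => rfl, fun p => rfl⟩ : 𝒳 × 𝒴 ≃ 𝒴 × 𝒳)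
      (fun ω => (X ω, Y ω))
  have eYXU : ent μ (fun ω => (Y ω, (X ω, U ω))) = eT := by
    exact ent_comp_equiv μ
      (⟨fun p => (p.2.2, p.1, p.2.1), fun p => (p.2.1, p.2.2, p.1),
        fun p => rfl, fun p => rfl⟩ : 𝒳 × 𝒰 × 𝒴 ≃ 𝒴 × 𝒳 × 𝒰)
      (fun ω => (X ω, U ω, Y ω))
  have eUXY : ent μ (fun ω => (U ω, (X ω, Y ω))) = eT := by
    exact ent_comp_equiv μ
      (⟨fun p => (p.2.1, p.1, p.2.2), fun p => (p.2.1, p.1, p.2.2),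
        fun p => rfl, fun p => rfl⟩ : 𝒳 × 𝒰 × 𝒴 ≃ 𝒰 × 𝒳 × 𝒴)
      (fun ω => (X ω, U ω, Y ω))
  -- hypotheses in terms of the variables
  rw [mutInfo] at h1
  rw [mutInfo, condEnt, eYX] at h2
  -- the two inequalities
  have ineqA : 0 ≤ eT - eXU := by
    have := condEnt_nonneg μ Y (fun ω => (X ω, U ω)) hY (hX.prodMk hU)
    rw [condEnt, eYXU] at this
    exact this
  have ineqB : 0 ≤ eUY + eXY - eT - b := by
    have := condMutInfo_nonneg μ U X Y hU hX hY
    rw [condMutInfo, eUXY] at this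
    exact this
  constructor
  · rw [condEnt, eYXU]
    linarith
  · rw [condMutInfo]
    linarith
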